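/- On V = ℝ^m (m = 2m̄ ≥ 4) with the standard inner product, standard basis {e_i}, and standard complex structure J, let A be the algebraic curvature tensor A(x,y,z,w) := (x₁y₂ − x₂y₁)(z₂w₁ − z₁w₂) (so A(e₁,e₂,e₂,e₁) = 1). With τ := Σ_{i,j} A(e_i,e_j,e_j,e_i), ρ(x,y) := Σ_i A(x,e_i,e_i,y), p₁A := (τ/(4m̄(m̄+1)))(π₁ + π₂), and p₂A := (1/(4(m̄+2)))(φ+ψ)(2ρ − (τ/m̄)⟨·,·⟩), the following hold: τ = 2; (p₁A)(e₃,e₄,e₄,e₃) = 2/(m̄(m̄+1)); (p₂A)(e₃,e₄,e₄,e₃) = −4/(m̄(m̄+2)); and (A − p₁A − p₂A)(e₃,e₄,e₄,e₃) ≠ 0. In particular all three quantities (p₁A)(e₃,e₄,e₄,e₃), (p₂A)(e₃,e₄,e₄,e₃), and (A − p₁A − p₂A)(e₃,e₄,e₄,e₃) are nonzero. -/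

import Mathlib

namespace GeometricRealizationsStmt13

noncomputable section

/-- The standard inner product on `ℝ^m`. -/
def ip {m : ℕ} (x y : Fin m → ℝ) : ℝ := ∑ i, x i * y i

/-- The standard complex structure on `ℝ^{2n}` (0-indexed): `J e_{2k} = e_{2k+1}`,
`J e_{2k+1} = -e_{2k}`. -/
def stdJ (n : ℕ) (x : Fin (2 * n) → ℝ) : Fin (2 * n) → ℝ := fun i =>
  if h : (i : ℕ) % 2 = 1 then x ⟨(i : ℕ) - 1, by have := i.isLt; omega⟩
  else - x ⟨(i : ℕ) + 1, by have := i.isLt; omega⟩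

/-- The curvature tensor `A(x,y,z,w) = (x₁y₂ − x₂y₁)(z₂w₁ − z₁w₂)` (1-indexed
coordinates; here `x₁ = x 0`, `x₂ = x 1`), so that `A(e₁,e₂,e₂,e₁) = 1`. -/
def A {n : ℕ} (hn : 2 ≤ n) (x y z w : Fin (2 * n) → ℝ) : ℝ :=
  (x ⟨0, by omega⟩ * y ⟨1, by omega⟩ - x ⟨1, by omega⟩ * y ⟨0, by omega⟩)
    * (z ⟨1, by omega⟩ * w ⟨0, by omega⟩ - z ⟨0, by omega⟩ * w ⟨1, by omega⟩)

/-- The standard basis vector `e_i` of `ℝ^m`. -/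
def e {m : ℕ} (i : Fin m) : Fin m → ℝ := Pi.single i 1

/-- The scalar curvature `τ = Σ_{i,j} A(e_i,e_j,e_j,e_i)`. -/
def tau {n : ℕ} (hn : 2 ≤ n) : ℝ := ∑ i : Fin (2 * n), ∑ j : Fin (2 * n), A hn (e i) (e j) (e j) (e i)

/-- The Ricci tensor `ρ(x,y) = Σ_i A(x,e_i,e_i,y)`. -/
def rho {n : ℕ} (hn : 2 ≤ n) (x y : Fin (2 * n) → ℝ) : ℝ := ∑ i : Fin (2 * n), A hn x (e i) (e i) y

/-- `π₁(x,y,z,w) = ⟨x,w⟩⟨y,z⟩ − ⟨x,z⟩⟨y,w⟩`. -/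
def pi1 {n : ℕ} (x y z w : Fin (2 * n) → ℝ) : ℝ := ip x w * ip y z - ip x z * ip y w

/-- `π₂(x,y,z,w) = ⟨Jx,w⟩⟨Jy,z⟩ − ⟨Jx,z⟩⟨Jy,w⟩ − 2⟨Jx,y⟩⟨Jz,w⟩`. -/
def pi2 {n : ℕ} (x y z w : Fin (2 * n) → ℝ) : ℝ :=
  ip (stdJ n x) w * ip (stdJ n y) z - ip (stdJ n x) z * ip (stdJ n y) w
    - 2 * ip (stdJ n x) y * ip (stdJ n z) w

/-- `θ = 2ρ − (τ/n)⟨·,·⟩`, the trace-free part input for `p₂`. -/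
def theta {n : ℕ} (hn : 2 ≤ n) (x y : Fin (2 * n) → ℝ) : ℝ :=
  2 * rho hn x y - (tau hn / (n : ℝ)) * ip x y

/-- `φ(θ)`. -/
def phi {n : ℕ} (θ : (Fin (2 * n) → ℝ) → (Fin (2 * n) → ℝ) → ℝ)
    (x y z w : Fin (2 * n) → ℝ) : ℝ :=
  ip x w * θ y z - ip x z * θ y w + θ x w * ip y z - θ x z * ip y w

/-- `ψ(θ)`. -/
def psi {n : ℕ} (θ : (Fin (2 * n) → ℝ) → (Fin (2 * n) → ℝ) → ℝ)
    (x y z w : Fin (2 * n) → ℝ) : ℝ :=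
  ip (stdJ n x) w * θ (stdJ n y) z - ip (stdJ n x) z * θ (stdJ n y) w
    - 2 * ip (stdJ n x) y * θ (stdJ n z) w
    + θ (stdJ n x) w * ip (stdJ n y) z - θ (stdJ n x) z * ip (stdJ n y) w
    - 2 * θ (stdJ n x) y * ip (stdJ n z) w

/-- The projection `p₁A = (τ/(4n(n+1)))(π₁ + π₂)`. -/
def p1A {n : ℕ} (hn : 2 ≤ n) (x y z w : Fin (2 * n) → ℝ) : ℝ :=
  (tau hn / (4 * (n : ℝ) * ((n : ℝ) + 1))) * (pi1 x y z w + pi2 x y z w)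

/-- The projection `p₂A = (1/(4(n+2)))(φ+ψ)(2ρ − (τ/n)⟨·,·⟩)`. -/
def p2A {n : ℕ} (hn : 2 ≤ n) (x y z w : Fin (2 * n) → ℝ) : ℝ :=
  (1 / (4 * ((n : ℝ) + 2))) * (phi (theta hn) x y z w + psi (theta hn) x y z w)

lemma sum_e {m : ℕ} (a b : Fin m) : ∑ i : Fin m, e i a * e i b = if a = b then (1:ℝ) else 0 := by
  simp [e, Pi.single_apply, ite_and, eq_comm]

lemma ip_e_e {m : ℕ} (a b : Fin m) : ip (e a) (e b) = if a = b then (1:ℝ) else 0 := by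
  simp [ip, e, Pi.single_apply, ite_and, eq_comm]

lemma ip_neg_left {m : ℕ} (x y : Fin m → ℝ) : ip (fun i => -(x i)) y = -(ip x y) := by
  simp [ip]

lemma rho_eq {n : ℕ} (hn : 2 ≤ n) (x y : Fin (2*n) → ℝ) :
    rho hn x y = x ⟨0, by omega⟩ * y ⟨0, by omega⟩ + x ⟨1, by omega⟩ * y ⟨1, by omega⟩ := by
  unfold rho A
  have h : ∀ i : Fin (2*n),
      (x ⟨0, by omega⟩ * e i ⟨1, by omega⟩ - x ⟨1, by omega⟩ * e i ⟨0, by omega⟩)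
        * (e i ⟨1, by omega⟩ * y ⟨0, by omega⟩ - e i ⟨0, by omega⟩ * y ⟨1, by omega⟩)
      = (x ⟨0, by omega⟩ * y ⟨0, by omega⟩) * (e i ⟨1, by omega⟩ * e i ⟨1, by omega⟩)
        + (x ⟨1, by omega⟩ * y ⟨1, by omega⟩) * (e i ⟨0, by omega⟩ * e i ⟨0, by omega⟩)
        - (x ⟨0, by omega⟩ * y ⟨1, by omega⟩ + x ⟨1, by omega⟩ * y ⟨0, by omega⟩)
            * (e i ⟨0, by omega⟩ * e i ⟨1, by omega⟩) := by
    intro i; ring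
  rw [Finset.sum_congr rfl fun i _ => h i]
  simp [Finset.sum_add_distrib, Finset.sum_sub_distrib, ← Finset.mul_sum, sum_e, Fin.ext_iff]

lemma tau_eq {n : ℕ} (hn : 2 ≤ n) : tau hn = 2 := by
  have h0 : tau hn = ∑ i : Fin (2*n), rho hn (e i) (e i) := rfl
  rw [h0]
  have h : ∀ i : Fin (2*n), rho hn (e i) (e i)
      = e i ⟨0, by omega⟩ * e i ⟨0, by omega⟩ + e i ⟨1, by omega⟩ * e i ⟨1, by omega⟩ :=
    fun i => rho_eq hn _ _
  rw [Finset.sum_congr rfl fun i _ => h i]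
  simp [Finset.sum_add_distrib, sum_e]
  norm_num

lemma stdJ_e2 {n : ℕ} (hn : 2 ≤ n) :
    stdJ n (e ⟨2, (by omega : 2 + 0 < 2 * n)⟩) = e ⟨3, (by omega : 3 + 0 < 2 * n)⟩ := by
  funext i
  simp only [stdJ, e, Pi.single_apply]
  split <;> rename_i h
  · by_cases h3 : (i : ℕ) = 3
    · simp [Fin.ext_iff, h3]
    · rw [if_neg (by simp [Fin.ext_iff]; omega), if_neg (by simp [Fin.ext_iff]; omega)]
  · rw [if_neg (by simp [Fin.ext_iff]; omega), if_neg (by simp [Fin.ext_iff]; omega)]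
    simp

lemma stdJ_e3 {n : ℕ} (hn : 2 ≤ n) :
    stdJ n (e ⟨3, (by omega : 3 + 0 < 2 * n)⟩) = fun i => -(e (⟨2, (by omega : 2 + 0 < 2 * n)⟩ : Fin (2*n)) i) := by
  funext i
  simp only [stdJ, e, Pi.single_apply]
  split <;> rename_i h
  · rw [if_neg (by simp [Fin.ext_iff]; omega), if_neg (by simp [Fin.ext_iff]; omega)]
    simp
  · by_cases h2 : (i : ℕ) = 2
    · simp [Fin.ext_iff, h2]
    · rw [if_neg (by simp [Fin.ext_iff]; omega), if_neg (by simp [Fin.ext_iff]; omega)]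

lemma theta_e_e {n : ℕ} (hn : 2 ≤ n) (a b : Fin (2*n)) (ha : 2 ≤ (a:ℕ)) (hb : 2 ≤ (b:ℕ)) :
    theta hn (e a) (e b) = if a = b then -(2/(n:ℝ)) else 0 := by
  unfold theta
  rw [rho_eq hn, tau_eq hn, ip_e_e]
  have h0 : e a (⟨0, by omega⟩ : Fin (2*n)) = 0 := by
    simp [e, Pi.single_apply, Fin.ext_iff]; omega
  have h1 : e a (⟨1, by omega⟩ : Fin (2*n)) = 0 := by
    clear hb; simp [e, Pi.single_apply, Fin.ext_iff]; omega
  rw [h0, h1]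
  split <;> ring

lemma theta_neg_left {n : ℕ} (hn : 2 ≤ n) (x y : Fin (2*n) → ℝ) :
    theta hn (fun i => -(x i)) y = -(theta hn x y) := by
  unfold theta
  rw [rho_eq hn, rho_eq hn, ip_neg_left]
  ring

/-- The curvature tensor `A` of the Kaehler metric
`g = δ + ½(u₁² + u₂²)(du₁² + du₂²)` at the origin has nonzero components in each of the
three unitary summands `W₁ ⊕ W₂ ⊕ W₃` of the space of Kaehler curvature tensors:
`τ = 2`, `(p₁A)(e₃,e₄,e₄,e₃) = 2/(n(n+1))`, `(p₂A)(e₃,e₄,e₄,e₃) = −4/(n(n+2))`, and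
`((id − p₁ − p₂)A)(e₃,e₄,e₄,e₃) ≠ 0`; in particular all three are nonzero. -/
theorem projections_nonzero {n : ℕ} (hn : 2 ≤ n) :
    tau hn = 2 ∧
    p1A hn (e ⟨2, by omega⟩) (e ⟨3, by omega⟩) (e ⟨3, by omega⟩) (e ⟨2, by omega⟩)
      = 2 / ((n : ℝ) * ((n : ℝ) + 1)) ∧
    p2A hn (e ⟨2, by omega⟩) (e ⟨3, by omega⟩) (e ⟨3, by omega⟩) (e ⟨2, by omega⟩)
      = -(4 / ((n : ℝ) * ((n : ℝ) + 2))) ∧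
    A hn (e ⟨2, by omega⟩) (e ⟨3, by omega⟩) (e ⟨3, by omega⟩) (e ⟨2, by omega⟩)
      - p1A hn (e ⟨2, by omega⟩) (e ⟨3, by omega⟩) (e ⟨3, by omega⟩) (e ⟨2, by omega⟩)
      - p2A hn (e ⟨2, by omega⟩) (e ⟨3, by omega⟩) (e ⟨3, by omega⟩) (e ⟨2, by omega⟩) ≠ 0 ∧
    p1A hn (e ⟨2, by omega⟩) (e ⟨3, by omega⟩) (e ⟨3, by omega⟩) (e ⟨2, by omega⟩) ≠ 0 ∧
    p2A hn (e ⟨2, by omega⟩) (e ⟨3, by omega⟩) (e ⟨3, by omega⟩) (e ⟨2, by omega⟩) ≠ 0 := by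
  have hn0 : (0:ℝ) < (n:ℝ) := by exact_mod_cast (by omega : 0 < n)
  have h1 : p1A hn (e ⟨2, by omega⟩) (e ⟨3, by omega⟩) (e ⟨3, by omega⟩) (e ⟨2, by omega⟩)
      = 2 / ((n : ℝ) * ((n : ℝ) + 1)) := by
    unfold p1A pi1 pi2
    rw [tau_eq hn, stdJ_e2 hn, stdJ_e3 hn, ip_neg_left, ip_neg_left]
    simp only [ip_e_e, Fin.mk.injEq]
    norm_num
    field_simp
  have h2 : p2A hn (e ⟨2, by omega⟩) (e ⟨3, by omega⟩) (e ⟨3, by omega⟩) (e ⟨2, by omega⟩)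
      = -(4 / ((n : ℝ) * ((n : ℝ) + 2))) := by
    unfold p2A phi psi
    rw [stdJ_e2 hn, stdJ_e3 hn]
    simp only [ip_neg_left, theta_neg_left hn]
    have t : ∀ a b : Fin (2*n), 2 ≤ (a:ℕ) → 2 ≤ (b:ℕ) →
        theta hn (e a) (e b) = if a = b then -(2/(n:ℝ)) else 0 := fun a b ha hb =>
      theta_e_e hn a b ha hb
    have t22 := t ⟨2, by omega⟩ ⟨2, by omega⟩ (by simp) (by simp)
    have t23 := t ⟨2, by omega⟩ ⟨3, by omega⟩ (by simp) (by simp)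
    have t32 := t ⟨3, by omega⟩ ⟨2, by omega⟩ (by simp) (by simp)
    have t33 := t ⟨3, by omega⟩ ⟨3, by omega⟩ (by simp) (by simp)
    simp only [t22, t23, t32, t33, ip_e_e, Fin.mk.injEq]
    norm_num
    field_simp
    ring
  have hA : A hn (e ⟨2, by omega⟩) (e ⟨3, by omega⟩) (e ⟨3, by omega⟩) (e ⟨2, by omega⟩) = 0 := by
    simp [A, e, Pi.single_apply, Fin.ext_iff]
  refine ⟨tau_eq hn, h1, h2, ?_, ?_, ?_⟩
  · rw [hA, h1, h2]
    have : (0:ℝ) - 2 / ((n : ℝ) * ((n : ℝ) + 1)) - -(4 / ((n : ℝ) * ((n : ℝ) + 2)))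
        = 2 / (((n:ℝ) + 1) * ((n:ℝ) + 2)) := by
      field_simp
      ring
    rw [this]
    positivity
  · rw [h1]; positivity
  · rw [h2]
    intro hc
    have : (0:ℝ) < 4 / ((n : ℝ) * ((n : ℝ) + 2)) := by positivity
    linarith


end

end GeometricRealizationsStmt13
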